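/- Let n ≥ 2, d ≥ 0, and ρ > 0. Then there exists k₀ > 0 (one may take k₀ = (4 + 2 min(d-2,0))/(1 + 2n/ρ)) such that for all 0 ≤ k ≤ k₀, the function U(x,t) = (ρ + kt + |x|²)^{d/2} satisfies ∂ₜU - ∂ₜΔU ≤ ΔU on ℝⁿ × (0,∞). -/

import Mathlib

/-- The Laplacian of a real-valued function on `EuclideanSpace ℝ (Fin n)`,
as the sum of second partial derivatives in the coordinate directions. -/
noncomputable def lap {n : ℕ} (f : EuclideanSpace ℝ (Fin n) → ℝ)
    (x : EuclideanSpace ℝ (Fin n)) : ℝ :=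
  ∑ i : Fin n, fderiv ℝ (fun y => fderiv ℝ f y (EuclideanSpace.single i 1)) x
    (EuclideanSpace.single i 1)

section aux
variable {n : ℕ}


lemma hSder (a : ℝ) (y : EuclideanSpace ℝ (Fin n)) :
    HasFDerivAt (fun y : EuclideanSpace ℝ (Fin n) => a + ‖y‖^(2:ℕ))
      (2 • innerSL ℝ y) y := by
  simpa using ((hasStrictFDerivAt_norm_sq y).hasFDerivAt).const_add a

lemma key1 (p a : ℝ) (ha : 0 < a) (y : EuclideanSpace ℝ (Fin n)) :
    HasFDerivAt (fun y : EuclideanSpace ℝ (Fin n) => (a + ‖y‖^(2:ℕ))^p)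
      ((p * (a + ‖y‖^(2:ℕ))^(p-1)) • (2 • innerSL ℝ y)) y := by
  have hpos : (0:ℝ) < a + ‖y‖^(2:ℕ) := by positivity
  exact (Real.hasDerivAt_rpow_const (Or.inl hpos.ne')).comp_hasFDerivAt y (hSder a y)

lemma inner_single (i : Fin n) (v : EuclideanSpace ℝ (Fin n)) :
    (inner ℝ v (EuclideanSpace.single i (1:ℝ)) : ℝ) = v i := by
  rw [EuclideanSpace.inner_single_right]; simp

lemma fderiv_apply_single (p a : ℝ) (ha : 0 < a) (y : EuclideanSpace ℝ (Fin n)) (i : Fin n) :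
    fderiv ℝ (fun y : EuclideanSpace ℝ (Fin n) => (a + ‖y‖^(2:ℕ))^p) y
      (EuclideanSpace.single i 1)
      = 2 * p * (a + ‖y‖^(2:ℕ))^(p-1) * y i := by
  rw [(key1 p a ha y).fderiv]
  simp [inner_single]; ring

lemma key2 (p a : ℝ) (ha : 0 < a) (x : EuclideanSpace ℝ (Fin n)) (i : Fin n) :
    HasFDerivAt (fun y : EuclideanSpace ℝ (Fin n) =>
        2 * p * (a + ‖y‖^(2:ℕ))^(p-1) * y i)
      ((2 * p * (a + ‖x‖^(2:ℕ))^(p-1)) • (EuclideanSpace.proj i : EuclideanSpace ℝ (Fin n) →L[ℝ] ℝ)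
        + (x i) • ((2*p) • (((p-1) * (a + ‖x‖^(2:ℕ))^(p-1-1)) • (2 • innerSL ℝ x)))) x := by
  have h1 : HasFDerivAt (fun y : EuclideanSpace ℝ (Fin n) => 2 * p * (a + ‖y‖^(2:ℕ))^(p-1))
      ((2*p) • (((p-1) * (a + ‖x‖^(2:ℕ))^(p-1-1)) • (2 • innerSL ℝ x))) x :=
    (key1 (p-1) a ha x).const_mul (2*p)
  have h2 : HasFDerivAt (fun y : EuclideanSpace ℝ (Fin n) => y i)
      (EuclideanSpace.proj i : EuclideanSpace ℝ (Fin n) →L[ℝ] ℝ) x :=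
    by simpa using (EuclideanSpace.proj (𝕜:=ℝ) i).hasFDerivAt (x:=x)
  exact h1.mul h2

lemma lap_formula (p a : ℝ) (ha : 0 < a) (x : EuclideanSpace ℝ (Fin n)) :
    lap (fun y => (a + ‖y‖^(2:ℕ))^p) x
      = 4*p*(p-1)*(a + ‖x‖^(2:ℕ))^(p-2) * ‖x‖^(2:ℕ)
        + 2*p*n*(a + ‖x‖^(2:ℕ))^(p-1) := by
  unfold lap
  have step : ∀ i : Fin n,
      fderiv ℝ (fun y => fderiv ℝ (fun y : EuclideanSpace ℝ (Fin n) => (a + ‖y‖^(2:ℕ))^p) y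
        (EuclideanSpace.single i 1)) x (EuclideanSpace.single i 1)
      = 4*p*(p-1)*(a + ‖x‖^(2:ℕ))^(p-2) * (x i)^2 + 2*p*(a + ‖x‖^(2:ℕ))^(p-1) := by
    intro i
    have hcongr : (fun y => fderiv ℝ (fun y : EuclideanSpace ℝ (Fin n) => (a + ‖y‖^(2:ℕ))^p) y
        (EuclideanSpace.single i 1))
        = fun y : EuclideanSpace ℝ (Fin n) => 2 * p * (a + ‖y‖^(2:ℕ))^(p-1) * y i := by
      funext y; exact fderiv_apply_single p a ha y i
    rw [hcongr, (key2 p a ha x i).fderiv]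
    have : ((EuclideanSpace.proj i : EuclideanSpace ℝ (Fin n) →L[ℝ] ℝ))
        (EuclideanSpace.single i 1) = 1 := by simp
    simp only [ContinuousLinearMap.add_apply, ContinuousLinearMap.smul_apply, this,
      ContinuousLinearMap.coe_smul', Pi.smul_apply, innerSL_apply_apply, inner_single, smul_eq_mul,
      show p - 1 - 1 = p - 2 by ring]
    ring
  rw [Finset.sum_congr rfl (fun i _ => step i)]
  rw [Finset.sum_add_distrib]
  have hsum : ∑ i : Fin n, (x i)^2 = ‖x‖^(2:ℕ) := by
    rw [EuclideanSpace.norm_eq, Real.sq_sqrt (by positivity)]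
    simp [Real.norm_eq_abs, sq_abs]
  rw [← Finset.mul_sum, hsum]
  simp [Finset.sum_const]
  ring


lemma lap_const (c : ℝ) (x : EuclideanSpace ℝ (Fin n)) : lap (fun _ => c) x = 0 := by
  simp [lap]

theorem Enonneg (d N ρ k t r S : ℝ) (hN : 2 ≤ N) (hρ : 0 < ρ) (hd : 0 < d) (hk : 0 ≤ k)
    (ht : 0 < t) (hr : 0 ≤ r) (hS : S = ρ + k*t + r)
    (hk0 : k*ρ + 2*k*N ≤ (4 + 2*min (d-2) 0)*ρ) :
    0 ≤ 2*(d-2)*S*r + 2*N*S^2 + k*((d-2)*(d-4)*r + N*(d-2)*S) - k*S^2 := by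
  have hN0 : (0:ℝ) ≤ N := by linarith
  have hkt : 0 ≤ k*t := mul_nonneg hk ht.le
  have hSpos : 0 < S := by nlinarith
  have hrS : r ≤ S := by nlinarith
  rcases le_or_gt d 2 with h2 | h2
  · have hm : min (d-2) 0 = d - 2 := min_eq_left (by linarith)
    rw [hm] at hk0
    have hdd : (0:ℝ) ≤ (d-2)*(d-4) := by nlinarith
    have t1 : 0 ≤ k*((d-2)*(d-4)*r) := mul_nonneg hk (mul_nonneg hdd hr)
    have t2 : 2*(d-2)*S*S ≤ 2*(d-2)*S*r := by
      nlinarith [mul_nonneg (mul_nonneg (by linarith : (0:ℝ) ≤ 2-d) hSpos.le) (by linarith : (0:ℝ) ≤ S - r)]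
    have t3 : k*N*(d-2)*S*S ≤ k*N*(d-2)*S*ρ := by
      nlinarith [mul_nonneg (mul_nonneg (mul_nonneg (mul_nonneg hk hN0) (by linarith : (0:ℝ) ≤ 2-d)) hSpos.le) (by linarith : (0:ℝ) ≤ S - ρ)]
    have hA : (k*ρ + 2*k*N)*S^2 ≤ ((4 + 2*(d-2))*ρ)*S^2 :=
      mul_le_mul_of_nonneg_right hk0 (sq_nonneg S)
    have hB : 0 ≤ k*N*d*S^2 :=
      mul_nonneg (mul_nonneg (mul_nonneg hk hN0) hd.le) (sq_nonneg S)
    have hD : 0 ≤ (N-2)*ρ*S^2 :=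
      mul_nonneg (mul_nonneg (by linarith) hρ.le) (sq_nonneg S)
    nlinarith [mul_nonneg hρ.le t1, mul_pos hρ hSpos,
      mul_le_mul_of_nonneg_left t2 hρ.le]
  · have hm : min (d-2) 0 = 0 := min_eq_right (by linarith)
    rw [hm] at hk0
    have hk4 : k ≤ 4 := by nlinarith [mul_nonneg hk hN0]
    have t0 : 0 ≤ 2*(d-2)*S*r := by nlinarith [mul_nonneg (mul_nonneg (by linarith : (0:ℝ) ≤ d-2) hSpos.le) hr]
    rcases le_or_gt d 4 with h4 | h4
    · have t1 : k*((d-2)*(d-4)*S) ≤ k*((d-2)*(d-4)*r) := by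
        nlinarith [mul_nonneg (mul_nonneg (mul_nonneg hk (by linarith : (0:ℝ) ≤ d-2)) (by linarith : (0:ℝ) ≤ 4-d)) (by linarith : (0:ℝ) ≤ S - r)]
      have t2 : 0 ≤ k*(d-2)*(N+d-4)*S :=
        mul_nonneg (mul_nonneg (mul_nonneg hk (by linarith)) (by linarith)) hSpos.le
      nlinarith [mul_le_mul_of_nonneg_right hk4 (sq_nonneg S), mul_nonneg (by linarith : (0:ℝ) ≤ 2*N - 4) (sq_nonneg S)]
    · have t1 : 0 ≤ k*((d-2)*(d-4)*r) :=
        mul_nonneg hk (mul_nonneg (mul_nonneg (by linarith) (by linarith)) hr)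
      have t2 : 0 ≤ k*(N*(d-2)*S) :=
        mul_nonneg hk (mul_nonneg (mul_nonneg hN0 (by linarith)) hSpos.le)
      nlinarith [mul_le_mul_of_nonneg_right hk4 (sq_nonneg S), mul_nonneg (by linarith : (0:ℝ) ≤ 2*N - 4) (sq_nonneg S)]

end aux

theorem stmt8 (n : ℕ) (hn : 2 ≤ n) (d ρ : ℝ) (hd : 0 ≤ d) (hρ : 0 < ρ) :
    ∃ k₀ > (0:ℝ), ∀ k : ℝ, 0 ≤ k → k ≤ k₀ →
      ∀ (x : EuclideanSpace ℝ (Fin n)) (t : ℝ), 0 < t →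
        deriv (fun s => (ρ + k * s + ‖x‖ ^ (2:ℕ)) ^ (d/2)) t -
            deriv (fun s => lap (fun y => (ρ + k * s + ‖y‖ ^ (2:ℕ)) ^ (d/2)) x) t ≤
          lap (fun y => (ρ + k * t + ‖y‖ ^ (2:ℕ)) ^ (d/2)) x := by
  rcases eq_or_lt_of_le hd with hd0 | hdpos
  · -- d = 0 : everything is constant
    refine ⟨1, one_pos, fun k hk hk1 x t ht => ?_⟩
    have hz : ∀ s c : ℝ, (fun y : EuclideanSpace ℝ (Fin n) => (ρ + k * s + ‖y‖ ^ (2:ℕ)) ^ (d/2))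
        = fun _ => (1:ℝ) := by
      intro s c; funext y; rw [← hd0]; norm_num
    have h1 : (fun s => (ρ + k * s + ‖x‖ ^ (2:ℕ)) ^ (d/2)) = fun _ : ℝ => (1:ℝ) := by
      funext s; rw [← hd0]; norm_num
    have h2 : (fun s => lap (fun y : EuclideanSpace ℝ (Fin n) =>
        (ρ + k * s + ‖y‖ ^ (2:ℕ)) ^ (d/2)) x) = fun _ : ℝ => (0:ℝ) := by
      funext s; rw [hz s 0, lap_const]
    rw [h1, h2, hz t 0, lap_const, deriv_const, deriv_const]
    norm_num
  · -- d > 0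
    set m : ℝ := min (d-2) 0 with hm
    have hm2 : -2 < m := hm ▸ lt_min (by linarith) (by linarith)
    have hmn : m ≤ 0 := min_le_right _ _
    have hN : (2:ℝ) ≤ (n:ℝ) := by exact_mod_cast hn
    have hden : (0:ℝ) < ρ + 2*(n:ℝ) := by linarith
    refine ⟨(4 + 2*m)*ρ/(ρ + 2*(n:ℝ)), div_pos (mul_pos (by linarith) hρ) hden,
      fun k hk hkk x t ht => ?_⟩
    have hk0 : k*ρ + 2*k*(n:ℝ) ≤ (4 + 2*m)*ρ := by
      have := mul_le_mul_of_nonneg_right hkk hden.le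
      rw [div_mul_cancel₀ _ hden.ne'] at this
      nlinarith
    set r : ℝ := ‖x‖ ^ (2:ℕ) with hr
    have hr0 : 0 ≤ r := by positivity
    have hkt : 0 ≤ k * t := mul_nonneg hk ht.le
    have haS : (0:ℝ) < ρ + k * t + r := by linarith
    set p : ℝ := d/2 with hp
    -- first derivative term
    have hlin : HasDerivAt (fun s => ρ + k * s + r) k t := by
      simpa using (((hasDerivAt_id t).const_mul k).const_add ρ).add_const r
    have hT1 : deriv (fun s => (ρ + k * s + r) ^ p) t
        = k * p * (ρ + k * t + r) ^ (p-1) :=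
      (hlin.rpow_const (Or.inl haS.ne')).deriv
    -- second derivative term
    have hev : (fun s => lap (fun y : EuclideanSpace ℝ (Fin n) =>
          (ρ + k * s + ‖y‖ ^ (2:ℕ)) ^ p) x)
        =ᶠ[nhds t] (fun s => 4*p*(p-1)*(ρ + k * s + ‖x‖ ^ (2:ℕ))^(p-2) * ‖x‖ ^ (2:ℕ)
          + 2*p*(n:ℝ)*(ρ + k * s + ‖x‖ ^ (2:ℕ))^(p-1)) := by
      filter_upwards [isOpen_Ioi.mem_nhds ht] with s hs
      exact lap_formula p (ρ + k * s) (by nlinarith [mul_nonneg hk (le_of_lt hs)]) x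
    have hT2 : deriv (fun s => lap (fun y : EuclideanSpace ℝ (Fin n) =>
          (ρ + k * s + ‖y‖ ^ (2:ℕ)) ^ p) x) t
        = 4*p*(p-1)*(k*(p-2)*(ρ + k * t + r)^(p-2-1)) * r
          + 2*p*(n:ℝ)*(k*(p-1)*(ρ + k * t + r)^(p-1-1)) := by
      rw [hev.deriv_eq]
      have hD : HasDerivAt (fun s => 4*p*(p-1)*(ρ + k * s + r)^(p-2) * r
            + 2*p*(n:ℝ)*(ρ + k * s + r)^(p-1))
          (4*p*(p-1)*(k*(p-2)*(ρ + k * t + r)^(p-2-1)) * r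
            + 2*p*(n:ℝ)*(k*(p-1)*(ρ + k * t + r)^(p-1-1))) t := by
        have hA := (hlin.rpow_const (p := p-2) (Or.inl haS.ne'))
        have hB := (hlin.rpow_const (p := p-1) (Or.inl haS.ne'))
        have := ((hA.const_mul (4*p*(p-1))).mul_const r).add (hB.const_mul (2*p*(n:ℝ)))
        convert this using 1 <;> rfl
      exact hD.deriv
    rw [lap_formula p (ρ + k * t) (by linarith) x]
    rw [hT1, hT2]
    -- rewrite powers in terms of S^(p-3)
    set S : ℝ := ρ + k * t + r with hSdef
    have hS : 0 < S := haS
    have hq : ∀ q : ℝ, S ^ q = S ^ (p-3) * S ^ (q - (p-3)) := fun q => by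
      rw [← Real.rpow_add hS]; ring_nf
    have e1 : S ^ (p-1) = S ^ (p-3) * S^(2:ℕ) := by
      rw [hq (p-1), ← Real.rpow_natCast S 2]; norm_num
    have e2 : S ^ (p-2) = S ^ (p-3) * S := by
      rw [hq (p-2), show p-2-(p-3) = 1 by ring, Real.rpow_one]
    have e3 : S ^ (p-2-1) = S ^ (p-3) := by rw [show p-2-1 = p-3 by ring]
    have e4 : S ^ (p-1-1) = S ^ (p-3) * S := by
      rw [show p-1-1 = p-2 by ring]; exact e2
    rw [e1, e2, e3, e4]
    have hppos : 0 < p := by rw [hp]; linarith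
    have hP3 : 0 < S ^ (p-3) := Real.rpow_pos_of_pos hS _
    have hE := Enonneg d (n:ℝ) ρ k t r S hN hρ hdpos hk ht hr0 hSdef (by rw [← hm]; exact hk0)
    have key : 0 ≤ p * S^(p-3) *
        (2*(d-2)*S*r + 2*(n:ℝ)*S^2 + k*((d-2)*(d-4)*r + (n:ℝ)*(d-2)*S) - k*S^2) :=
      mul_nonneg (mul_nonneg hppos.le hP3.le) hE
    have expand : 4*p*(p-1)*(S^(p-3)*S) * r + 2*p*(n:ℝ)*(S^(p-3)*S^(2:ℕ))
        - (k * p * (S^(p-3)*S^(2:ℕ)) - (4*p*(p-1)*(k*(p-2)*S^(p-3)) * r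
          + 2*p*(n:ℝ)*(k*(p-1)*(S^(p-3)*S))))
        = p * S^(p-3) *
          (2*(d-2)*S*r + 2*(n:ℝ)*S^2 + k*((d-2)*(d-4)*r + (n:ℝ)*(d-2)*S) - k*S^2) := by
      rw [hp]; ring
    rw [← hr]
    linarith [key, expand.ge, expand.le]
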